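/- Let P = (p_1, …, p_n) be a finite sequence of pairwise distinct points in ℝ^d and q a query point whose distances to p_1, …, p_n are pairwise distinct. Fix 1 ≤ j < ℓ ≤ n and suppose that within the prefix P_{1:ℓ} the j+1 points closest to q are p_{i_1}, …, p_{i_j}, p_ℓ, where p_ℓ is the (j+1)-th nearest and i_1, …, i_j < ℓ. Then there exists m ∈ {1, …, j} such that Cell(p_{i_m}; P_{1:ℓ}) is a proper subset of Cell(p_{i_m}; P_{1:ℓ−1}); i.e., the insertion of p_ℓ prunes the Voronoi cell of one of the j nearer neighbors, so p_ℓ is a successor of p_{i_m}. -/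

import Mathlib

open Set

noncomputable section

/-- Euclidean space `ℝ^d`. -/
abbrev E (d : ℕ) := EuclideanSpace ℝ (Fin d)

/-- The Voronoi cell of `p` with respect to the site set `S`:
all points at least as close to `p` as to every site of `S`. -/
def cell {d : ℕ} (p : E d) (S : Set (E d)) : Set (E d) :=
  {x | ∀ s ∈ S, dist x p ≤ dist x s}

/-- The prefix set `P_{1:m}` consisting of the first `m` points of the
sequence `p` (0-based indices `< m`). -/
def pref {d n : ℕ} (p : Fin n → E d) (m : ℕ) : Set (E d) :=
  p '' {i : Fin n | (i : ℕ) < m}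

/-- `p j` is a successor of `p i` (`p j ∈ L i`): `i < j` and the insertion of
`p j` prunes the Voronoi cell of `p i`, i.e. `Cell(p_i; P_{1:j})` is a proper
subset of `Cell(p_i; P_{1:j-1})` (in 1-based notation). -/
def isSucc {d n : ℕ} (p : Fin n → E d) (i j : Fin n) : Prop :=
  i < j ∧ cell (p i) (pref p ((j : ℕ) + 1)) ⊂ cell (p i) (pref p (j : ℕ))

/-- `p i` is the nearest neighbor `Φ_{1:m}(q)` of `q` in the prefix `P_{1:m}`. -/
def isNearest {d n : ℕ} (p : Fin n → E d) (q : E d) (m : ℕ) (i : Fin n) : Prop :=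
  (i : ℕ) < m ∧ ∀ j : Fin n, (j : ℕ) < m → dist q (p i) ≤ dist q (p j)

/-- if, within the prefix `P_{1:ℓ}`, the `j+1` points closest to
`q` are `p_{i_1}, …, p_{i_j}, p_ℓ` with `p_ℓ` the (j+1)-th nearest, then the
insertion of `p_ℓ` prunes the Voronoi cell of some `p_{i_m}`, i.e. `p_ℓ` is a
successor of some `p_{i_m}`. -/
theorem stmt9
    {d n j : ℕ} (hd : 1 ≤ d) (hj1 : 1 ≤ j)
    (p : Fin n → E d) (hp : Function.Injective p)
    (q : E d) (hq : Function.Injective fun i => dist q (p i))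
    (ℓ : Fin n) (hjℓ : j < (ℓ : ℕ) + 1)
    (ι : Fin j → Fin n) (hιinj : Function.Injective ι)
    (hιlt : ∀ a, ι a < ℓ)
    (hcloser : ∀ a, dist q (p (ι a)) < dist q (p ℓ))
    (hfar : ∀ b : Fin n, b ≤ ℓ → (∀ a, ι a ≠ b) → b ≠ ℓ →
      dist q (p ℓ) < dist q (p b)) :
    ∃ m : Fin j, isSucc p (ι m) ℓ := by
  classical
  set D := dist q (p ℓ) with hDdef
  have hD0 : 0 < D := lt_of_le_of_lt dist_nonneg (hcloser ⟨0, hj1⟩)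
  set x : ℝ → E d := fun t => AffineMap.lineMap q (p ℓ) t with hxdef
  have hxc : Continuous x := AffineMap.lineMap_continuous
  have hx0 : x 0 = q := AffineMap.lineMap_apply_zero q (p ℓ)
  have hx1 : x 1 = p ℓ := AffineMap.lineMap_apply_one q (p ℓ)
  have hgd : ∀ t : ℝ, 0 ≤ t → t ≤ 1 → dist (x t) (p ℓ) = (1 - t) * D := by
    intro t h0 h1
    have h := dist_lineMap_right q (p ℓ) t
    rw [Real.norm_eq_abs, abs_of_nonneg (by linarith)] at h
    exact h
  have hqx : ∀ t : ℝ, 0 ≤ t → t ≤ 1 → dist q (x t) = t * D := by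
    intro t h0 h1
    have h := dist_left_lineMap q (p ℓ) t
    rw [Real.norm_eq_abs, abs_of_nonneg h0] at h
    exact h
  have hfarB : ∀ t : ℝ, 0 ≤ t → t ≤ 1 → ∀ b : Fin n, (b : ℕ) < (ℓ : ℕ) →
      (∀ a, ι a ≠ b) → dist (x t) (p ℓ) < dist (x t) (p b) := by
    intro t h0 h1 b hb hbn
    have hblt : b < ℓ := Fin.lt_def.mpr hb
    have hqb : D < dist q (p b) := hfar b (le_of_lt hblt) hbn (ne_of_lt hblt)
    have htri : dist q (p b) ≤ dist q (x t) + dist (x t) (p b) := dist_triangle _ _ _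
    rw [hqx t h0 h1] at htri
    rw [hgd t h0 h1]
    nlinarith
  set T : Set ℝ := Icc (0:ℝ) 1 ∩ {t | ∃ a : Fin j, dist (x t) (p (ι a)) ≤ dist (x t) (p ℓ)}
    with hTdef
  have hTsub : T ⊆ Icc (0:ℝ) 1 := inter_subset_left
  have hTc : IsClosed T := by
    have he : {t : ℝ | ∃ a : Fin j, dist (x t) (p (ι a)) ≤ dist (x t) (p ℓ)}
        = ⋃ a : Fin j, {t | dist (x t) (p (ι a)) ≤ dist (x t) (p ℓ)} := by
      ext t; simp [mem_iUnion]
    rw [hTdef, he]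
    exact isClosed_Icc.inter (isClosed_iUnion_of_finite fun a =>
      isClosed_le (hxc.dist continuous_const) (hxc.dist continuous_const))
  have hT0 : (0:ℝ) ∈ T :=
    ⟨⟨le_refl 0, zero_le_one⟩, ⟨⟨0, hj1⟩, by rw [hx0]; exact (hcloser _).le⟩⟩
  have hTne : T.Nonempty := ⟨0, hT0⟩
  have hTbdd : BddAbove T := BddAbove.mono hTsub bddAbove_Icc
  set t₀ := sSup T with ht₀def
  have ht₀T : t₀ ∈ T := hTc.csSup_mem hTne hTbdd
  have ht₀0 : 0 ≤ t₀ := (hTsub ht₀T).1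
  have ht₀1 : t₀ ≤ 1 := (hTsub ht₀T).2
  have ht₀lt1 : t₀ < 1 := by
    rcases lt_or_eq_of_le ht₀1 with h | h
    · exact h
    · exfalso
      obtain ⟨a, ha⟩ := ht₀T.2
      rw [h, hx1] at ha
      have hpe : p (ι a) = p ℓ := by
        have hle0 : dist (p (ι a)) (p ℓ) ≤ 0 := by simpa [dist_comm] using ha
        exact dist_le_zero.mp hle0
      have hEq : ι a = ℓ := hp hpe
      exact absurd hEq (ne_of_lt (hιlt a))
  obtain ⟨a₁, ha₁⟩ := ht₀T.2
  have hCall : ∀ᶠ t in nhds t₀, ∀ b : Fin n, (b : ℕ) < (ℓ : ℕ) → (∀ a, ι a ≠ b) →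
      dist (x t) (p (ι a₁)) < dist (x t) (p b) := by
    rw [Filter.eventually_all]
    intro b
    by_cases h1 : (b : ℕ) < (ℓ : ℕ)
    · by_cases h2 : ∀ a, ι a ≠ b
      · have hlt : dist (x t₀) (p (ι a₁)) < dist (x t₀) (p b) :=
          lt_of_le_of_lt ha₁ (hfarB t₀ ht₀0 ht₀1 b h1 h2)
        have hev := ContinuousAt.eventually_lt
          ((hxc.dist continuous_const).continuousAt)
          ((hxc.dist continuous_const).continuousAt) hlt
        filter_upwards [hev] with t ht _ _ using ht
      · exact Filter.Eventually.of_forall fun t _ hh => (h2 hh).elim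
    · exact Filter.Eventually.of_forall fun t hh => (h1 hh).elim
  have hlt1 : ∀ᶠ t in nhds t₀, t < 1 := isOpen_Iio.eventually_mem ht₀lt1
  have hfinal := (hlt1.and hCall).filter_mono (nhdsWithin_le_nhds (s := Ioi t₀))
  obtain ⟨t₁, ht₁mem, ht₁lt1, ht₁C⟩ := (eventually_mem_nhdsWithin.and hfinal).exists
  have ht₁0 : (0:ℝ) ≤ t₁ := le_of_lt (lt_of_le_of_lt ht₀0 ht₁mem)
  have ht₁1 : t₁ ≤ 1 := le_of_lt ht₁lt1
  have ht₁T : t₁ ∉ T := fun h => absurd (le_csSup hTbdd h) (not_le.mpr ht₁mem)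
  have hstrict : ∀ a : Fin j, dist (x t₁) (p ℓ) < dist (x t₁) (p (ι a)) := by
    intro a
    by_contra hcon
    push_neg at hcon
    exact ht₁T ⟨⟨ht₁0, ht₁1⟩, a, hcon⟩
  obtain ⟨m, -, hm⟩ := Finset.exists_min_image Finset.univ
    (fun a => dist (x t₁) (p (ι a))) ⟨⟨0, hj1⟩, Finset.mem_univ _⟩
  refine ⟨m, hιlt m, ?_⟩
  have hsub : cell (p (ι m)) (pref p ((ℓ : ℕ) + 1)) ⊆ cell (p (ι m)) (pref p (ℓ : ℕ)) := by
    intro z hz s hs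
    exact hz s (Set.image_mono (fun i hi => Nat.lt_succ_of_lt hi) hs)
  rw [Set.ssubset_iff_of_subset hsub]
  refine ⟨x t₁, ?_, ?_⟩
  · intro s hs
    obtain ⟨b, hb, rfl⟩ := hs
    by_cases hba : ∃ a, ι a = b
    · obtain ⟨a, rfl⟩ := hba
      exact hm a (Finset.mem_univ a)
    · push_neg at hba
      exact le_of_lt (lt_of_le_of_lt (hm a₁ (Finset.mem_univ _)) (ht₁C b hb hba))
  · intro hmem
    have hle := hmem (p ℓ) ⟨ℓ, Nat.lt_succ_self _, rfl⟩
    exact absurd hle (not_le.mpr (hstrict m))
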